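/- The SDec-POMDP and the Dec-POMDP-Com are equivalent: their models reduce to one another, their model-policy structures reduce to one another, and for every joint history h̄ and initial belief b⁰ the corresponding value functions agree, V_{SDec-POMDP}(h̄, b⁰) = V_{Dec-POMDP-Com}(h̄, b⁰). -/

import Mathlib

/-!
Statement 15: The SDec-POMDP and the Dec-POMDP-Com are equivalent: their
models reduce to one another, their model-policy structures reduce to one
another, and all joint-history values agree from the initial belief.
-/

open scoped NNReal

/-- A decentralized POMDP `⟨I,S,Ā,Ō,T,O,R⟩`. -/
structure DecPOMDP (I S : Type) (A O : I → Type) where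
  T : S → (∀ i, A i) → PMF S
  Obs : S → (∀ i, A i) → PMF (∀ i, O i)
  R : S → (∀ i, A i) → ℝ

/-- A Dec-POMDP-Com: a Dec-POMDP extended with an alphabet `Msg` of messages
and a communication cost function; after its control action each agent takes
a communication action which, under instantaneous noise-free broadcast, is
received as an additional observation by all other agents. -/
structure DecPOMDPCom (I S : Type) (A O : I → Type) (Msg : Type) extends
    DecPOMDP I S A O where
  cost : (I → Msg) → ℝ

/-- A semi-decentralized POMDP with sojourn-time kernel `F` and selector
functions routing memories, actions, and observations. -/
structure SDecPOMDP (I S : Type) (A O : I → Type) where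
  F : S → (∀ i, A i) → (I → ℝ≥0) → PMF (I → ℝ≥0)
  T : S → (∀ i, A i) → (I → ℝ≥0) → PMF S
  Obs : S → (∀ i, A i) → (I → ℝ≥0) → PMF (∀ i, O i)
  R : S → (∀ i, A i) → ℝ
  fSel : (I → ℝ≥0) → I → List (∀ j, Option (A j × O j)) →
    Option (List (∀ j, Option (A j × O j)))
  fSelC : (I → ℝ≥0) → (∀ j, List (A j × O j)) → (∀ j, Option (List (A j × O j)))
  gSel : (I → ℝ≥0) → I → (∀ j, A j) → (∀ j, Option (A j))
  gSelC : (I → ℝ≥0) → (∀ j, A j) → (∀ j, Option (A j))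
  hSel : (I → ℝ≥0) → I → (∀ j, O j) → (∀ j, Option (O j))
  hSelC : (I → ℝ≥0) → (∀ j, O j) → (∀ j, Option (O j))

/-- Actions of the agent set augmented with a blackboard agent. -/
def extA (I : Type) (A : I → Type) : Option I → Type
  | none => Unit
  | some i => A i

/-- Observations of the augmented agent set. -/
def extO (I : Type) (A O : I → Type) : Option I → Type
  | none => ∀ i, List (A i × O i)
  | some i => O i

/-- Blackboard memory `M_c = (∏ i, ({∅} ∪ A_i O_i))*`. -/
abbrev McT (I : Type) (A O : I → Type) := List (∀ i, Option (A i × O i))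

/-- Local action–observation string `(A_i O_i)*` of agent `i`. -/
abbrev LocT (I : Type) (A O : I → Type) (i : I) := List (A i × O i)

/-- Local history of agent `i` in the Dec-POMDP obtained from a
Dec-POMDP-Com. -/
abbrev ComHist (I : Type) (A O : I → Type) (Msg : Type) (i : I) :=
  List ((A i × Msg) × (O i × (I → Msg)))

section

variable {I S : Type} {A O : I → Type}
variable [Fintype I] [DecidableEq I] [Fintype S]
  [∀ i, Fintype (A i)] [∀ i, Fintype (O i)]

/-- The decentralized value recursion (horizon-indexed). -/
noncomputable def decValue (M : DecPOMDP I S A O) (γ : ℝ)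
    (π : ∀ i, LocT I A O i → A i) : ℕ → S → (∀ i, LocT I A O i) → ℝ
  | 0, _, _ => 0
  | n + 1, s, h =>
      M.R s (fun i => π i (h i)) +
        γ * ∑ s' : S, ∑ o' : (∀ i, O i),
          (M.T s (fun i => π i (h i)) s').toReal *
            (M.Obs s' (fun i => π i (h i)) o').toReal *
              decValue M γ π n s' (fun i => h i ++ [(π i (h i), o' i)])

/-- The semi-decentralized value recursion (horizon-indexed). -/
noncomputable def sdecValue (M : DecPOMDP I S A O) (γ : ℝ)
    (F : S → (∀ i, A i) → PMF (I → ℝ≥0))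
    (ψ : McT I A O → (∀ i, LocT I A O i) → PMF (∀ i, A i))
    (ηc : McT I A O → (∀ i, A i) → (∀ i, O i) → PMF (McT I A O))
    (ηa : ∀ i, LocT I A O i → (∀ i, A i) → (∀ i, O i) → PMF (LocT I A O i)) :
    ℕ → McT I A O → (∀ i, LocT I A O i) → S → ℝ
  | 0, _, _, _ => 0
  | n + 1, mc, m, s =>
      ∑ a : (∀ i, A i), (ψ mc m a).toReal *
        (M.R s a +
          γ * ∑' τ : (I → ℝ≥0), (F s a τ).toReal *
            ∑ s' : S, ∑ o' : (∀ i, O i),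
              (M.T s a s').toReal * (M.Obs s' a o').toReal *
                ∑' mc' : McT I A O, (ηc mc a o' mc').toReal *
                  ∑' m' : (∀ i, LocT I A O i),
                    (∏ i, (ηa i (m i) a o' (m' i)).toReal) *
                      sdecValue M γ F ψ ηc ηa n mc' m' s')

variable {Msg : Type} [Fintype Msg]

/-- The value recursion of a Dec-POMDP-Com under a pair of control and
communication policies (horizon-indexed). -/
noncomputable def comValue (C : DecPOMDPCom I S A O Msg) (γ : ℝ)
    (πa : ∀ i, ComHist I A O Msg i → A i)
    (πσ : ∀ i, ComHist I A O Msg i → Msg) :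
    ℕ → S → (∀ i, ComHist I A O Msg i) → ℝ
  | 0, _, _ => 0
  | n + 1, s, h =>
      (C.R s (fun i => πa i (h i)) - C.cost fun i => πσ i (h i)) +
        γ * ∑ s' : S, ∑ o' : (∀ i, O i),
          (C.T s (fun i => πa i (h i)) s').toReal *
            (C.Obs s' (fun i => πa i (h i)) o').toReal *
              comValue C γ πa πσ n s'
                (fun i => h i ++
                  [((πa i (h i), πσ i (h i)), (o' i, fun j => πσ j (h j)))])

end


open scoped Classical in
lemma aux_tsum_one {α : Type*} (p : PMF α) : ∑' a, (p a).toReal = 1 := by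
  rw [← ENNReal.tsum_toReal_eq (fun a => p.apply_ne_top a), p.tsum_coe, ENNReal.toReal_one]

lemma aux_sum_pure {α : Type*} [Fintype α] (x : α) (g : α → ℝ) :
    ∑ a : α, ((PMF.pure x) a).toReal * g a = g x := by
  rw [Finset.sum_eq_single x]
  · simp [PMF.pure_apply_self]
  · intro b _ hb; simp [PMF.pure_apply_of_ne _ _ hb]
  · simp

lemma aux_tsum_pure {α : Type*} (x : α) (g : α → ℝ) :
    ∑' a, ((PMF.pure x) a).toReal * g a = g x := by
  rw [tsum_eq_single x]
  · simp [PMF.pure_apply_self]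
  · intro b hb; simp [PMF.pure_apply_of_ne _ _ hb]

lemma aux_tsum_prod_pure {I : Type*} [Fintype I] {β : I → Type*} (x : ∀ i, β i)
    (g : (∀ i, β i) → ℝ) :
    ∑' m : ∀ i, β i, (∏ i, ((PMF.pure (x i)) (m i)).toReal) * g m = g x := by
  rw [tsum_eq_single x]
  · simp [PMF.pure_apply_self]
  · intro b hb
    obtain ⟨i, hi⟩ := Function.ne_iff.mp hb
    rw [Finset.prod_eq_zero (Finset.mem_univ i), zero_mul]
    simp [PMF.pure_apply_of_ne _ _ hi]

open scoped Classical in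
lemma aux_sum_map {α β : Type*} [Fintype α] [Fintype β] (p : PMF α) (f : α → β)
    (g : β → ℝ) :
    ∑ b : β, ((p.map f) b).toReal * g b = ∑ a : α, (p a).toReal * g (f a) := by
  have h : ∀ b, ((p.map f) b).toReal = ∑ a : α, if b = f a then (p a).toReal else 0 := by
    intro b
    rw [PMF.map_apply, tsum_fintype, ENNReal.toReal_sum]
    · exact Finset.sum_congr rfl fun a _ => by split <;> simp
    · intro a _; split
      · exact p.apply_ne_top a
      · simp
  simp only [h, Finset.sum_mul]
  rw [Finset.sum_comm]
  refine Finset.sum_congr rfl fun a _ => ?_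
  simp [ite_mul]

/-- The Dec-POMDP obtained from a Dec-POMDP-Com by folding communication
actions into control actions and broadcast messages into observations. -/
noncomputable def com2dec {I S : Type} {A O : I → Type} {Msg : Type}
    (C : DecPOMDPCom I S A O Msg) :
    DecPOMDP I S (fun i => A i × Msg) (fun i => O i × (I → Msg)) where
  T := fun s a => C.T s fun i => (a i).1
  Obs := fun s' a => (C.Obs s' fun i => (a i).1).map fun o i => (o i, fun j => (a j).2)
  R := fun s a => C.R s (fun i => (a i).1) - C.cost fun i => (a i).2

lemma comValue_eq_sdecValue {I S : Type} {A O : I → Type} {Msg : Type}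
    [Fintype I] [DecidableEq I] [Fintype S]
    [∀ i, Fintype (A i)] [∀ i, Fintype (O i)] [Fintype Msg]
    (C : DecPOMDPCom I S A O Msg) (γ : ℝ)
    (πa : ∀ i, ComHist I A O Msg i → A i) (πσ : ∀ i, ComHist I A O Msg i → Msg)
    (F : S → (∀ i, A i × Msg) → PMF (I → ℝ≥0))
    (ψ : McT I (fun i => A i × Msg) (fun i => O i × (I → Msg)) →
      (∀ i, LocT I (fun i => A i × Msg) (fun i => O i × (I → Msg)) i) →
        PMF (∀ i, A i × Msg))
    (ηc : McT I (fun i => A i × Msg) (fun i => O i × (I → Msg)) →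
      (∀ i, A i × Msg) → (∀ i, O i × (I → Msg)) →
        PMF (McT I (fun i => A i × Msg) (fun i => O i × (I → Msg))))
    (ηa : ∀ i, LocT I (fun i => A i × Msg) (fun i => O i × (I → Msg)) i →
      (∀ i, A i × Msg) → (∀ i, O i × (I → Msg)) →
        PMF (LocT I (fun i => A i × Msg) (fun i => O i × (I → Msg)) i))
    (hψ : ∀ mc m, ψ mc m = PMF.pure fun i => (πa i (m i), πσ i (m i)))
    (hηc : ∀ mc a o, ηc mc a o = PMF.pure mc)
    (hηa : ∀ i mi a o, ηa i mi a o = PMF.pure (mi ++ [(a i, o i)])) :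
    ∀ (n : ℕ) (mc : McT I (fun i => A i × Msg) (fun i => O i × (I → Msg)))
      (h : ∀ i, ComHist I A O Msg i) (s : S),
      comValue C γ πa πσ n s h = sdecValue (com2dec C) γ F ψ ηc ηa n mc h s := by
  intro n
  induction n with
  | zero => intro mc h s; simp [comValue, sdecValue]
  | succ n ih =>
    intro mc h s
    set ab : ∀ i, A i × Msg := fun i => (πa i (h i), πσ i (h i)) with hab
    rw [sdecValue, hψ, aux_sum_pure ab]
    have hG : ∀ (s' : S) (o2 : ∀ i, O i × (I → Msg)),
        (∑' mc', (ηc mc ab o2 mc').toReal *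
          ∑' m', (∏ i, (ηa i (h i) ab o2 (m' i)).toReal) *
            sdecValue (com2dec C) γ F ψ ηc ηa n mc' m' s')
        = sdecValue (com2dec C) γ F ψ ηc ηa n mc
            (fun i => h i ++ [(ab i, o2 i)]) s' := by
      intro s' o2
      rw [hηc, aux_tsum_pure]
      simp only [hηa]
      exact aux_tsum_prod_pure (fun i => h i ++ [(ab i, o2 i)])
        (fun m' => sdecValue (com2dec C) γ F ψ ηc ηa n mc m' s')
    simp only [hG]
    rw [tsum_mul_right, aux_tsum_one, one_mul]
    have hO : ∀ s' : S,
        (∑ o2 : ∀ i, O i × (I → Msg),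
          ((com2dec C).T s ab s').toReal * ((com2dec C).Obs s' ab o2).toReal *
            sdecValue (com2dec C) γ F ψ ηc ηa n mc
              (fun i => h i ++ [(ab i, o2 i)]) s')
        = ∑ o : ∀ i, O i,
          ((com2dec C).T s ab s').toReal *
            ((C.Obs s' fun i => (ab i).1) o).toReal *
            sdecValue (com2dec C) γ F ψ ηc ηa n mc
              (fun i => h i ++ [(ab i, (o i, fun j => (ab j).2))]) s' := by
      intro s'
      simp only [mul_assoc, ← Finset.mul_sum]
      congr 1
      exact aux_sum_map (C.Obs s' fun i => (ab i).1)
        (fun o i => (o i, fun j => (ab j).2))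
        (fun o2 => sdecValue (com2dec C) γ F ψ ηc ηa n mc
          (fun i => h i ++ [(ab i, o2 i)]) s')
    simp only [hO]
    rw [comValue]
    congr 1
    congr 1
    refine Finset.sum_congr rfl fun s' _ => ?_
    refine Finset.sum_congr rfl fun o _ => ?_
    rw [ih mc (fun i => h i ++ [((πa i (h i), πσ i (h i)), (o i, fun j => πσ j (h j)))]) s']
    rfl

/-- The SDec-POMDP and the Dec-POMDP-Com are equivalent:
(i) their models reduce to one another (via the Dec-POMDP), (ii) their
model-policy structures reduce to one another, and (iii) for every joint
history `h̄` and initial belief `b⁰` the corresponding value functions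
agree. -/
theorem sdecpomdp_decpomdpcom_equivalence :
    -- (i) mutual model reduction
    ((∀ (I S : Type) (A O : I → Type) (Msg : Type) [Fintype I] [Fintype S]
        [∀ i, Fintype (A i)] [∀ i, Fintype (O i)] [Fintype Msg],
      ∀ C : DecPOMDPCom I S A O Msg,
        ∃ M : DecPOMDP I S (fun i => A i × Msg) (fun i => O i × (I → Msg)),
          (∀ s a, M.T s a = C.T s fun i => (a i).1) ∧
          (∀ s' a, M.Obs s' a =
            (C.Obs s' fun i => (a i).1).map fun o i => (o i, fun j => (a j).2)) ∧
          (∀ s a, M.R s a = C.R s (fun i => (a i).1) - C.cost fun i => (a i).2)) ∧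
     (∀ (I S : Type) (A O : I → Type) [Fintype I] [Fintype S]
        [∀ i, Fintype (A i)] [∀ i, Fintype (O i)],
      ∀ M : DecPOMDP I S A O,
        ∃ D : SDecPOMDP I S A O,
          D.R = M.R ∧
          (∀ s a τ, D.T s a τ = M.T s a) ∧
          (∀ s a τ, D.Obs s a τ = M.Obs s a) ∧
          (∀ τ i a, D.gSel τ i a i = some (a i) ∧
            ∀ j, j ≠ i → D.gSel τ i a j = none) ∧
          (∀ τ i o, D.hSel τ i o i = some (o i) ∧
            ∀ j, j ≠ i → D.hSel τ i o j = none) ∧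
          (∀ τ a j, D.gSelC τ a j = none) ∧
          (∀ τ o j, D.hSelC τ o j = none)) ∧
     (∀ (I S : Type) (A O : I → Type) [Fintype I] [Fintype S]
        [∀ i, Fintype (A i)] [∀ i, Fintype (O i)],
      ∀ D : SDecPOMDP I S A O,
        ∃ M : DecPOMDP (Option I) (S × (I → ℝ≥0)) (extA I A) (extO I A O),
          (∀ (s : S) (τ : I → ℝ≥0) (a : ∀ j, extA I A j) (s' : S) (τ' : I → ℝ≥0),
            M.T (s, τ) a (s', τ') =
              D.F s' (fun i => a (some i)) τ τ' *
                D.T s (fun i => a (some i)) τ s') ∧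
          (∀ (s' : S) (τ' : I → ℝ≥0) (a : ∀ j, extA I A j),
            (M.Obs (s', τ') a).map (fun o i => o (some i)) =
              D.Obs s' (fun i => a (some i)) τ') ∧
          (∀ (s : S) (τ : I → ℝ≥0) (a : ∀ j, extA I A j),
            M.R (s, τ) a = D.R s (fun i => a (some i)))) ∧
     (∀ (I S : Type) (A O : I → Type) [Fintype I] [Fintype S]
        [∀ i, Fintype (A i)] [∀ i, Fintype (O i)],
      ∀ M : DecPOMDP I S A O,
        ∃ (Msg : Type) (_ : Fintype Msg) (C : DecPOMDPCom I S A O Msg),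
          C.T = M.T ∧ C.Obs = M.Obs ∧ C.R = M.R ∧ (∀ σ, C.cost σ = 0))) ∧
    -- (ii) mutual model-policy reduction
    ((∀ (I : Type) (A O : I → Type) (Msg : Type)
        (πa : ∀ i, ComHist I A O Msg i → A i)
        (πσ : ∀ i, ComHist I A O Msg i → Msg),
      ∃ π : ∀ i, ComHist I A O Msg i → A i × Msg,
        ∀ i m, π i m = (πa i m, πσ i m)) ∧
     (∀ (I : Type) (A O : I → Type) (πd : ∀ i, LocT I A O i → A i),
      ∃ (fAg : I → McT I A O → Option (McT I A O))
        (fC : (∀ i, LocT I A O i) → (∀ i, Option (LocT I A O i)))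
        (ηa : ∀ i, LocT I A O i → (∀ i, A i) → (∀ i, O i) → PMF (LocT I A O i))
        (ψ : McT I A O → (∀ i, LocT I A O i) → PMF (∀ i, A i)),
        (∀ i mc, fAg i mc = none) ∧
        (∀ m i, fC m i = none) ∧
        (∀ i mi a o, ηa i mi a o = PMF.pure (mi ++ [(a i, o i)])) ∧
        (∀ mc m, ψ mc m = PMF.pure fun i => πd i (m i))) ∧
     (∀ (I : Type) (A O : I → Type)
        (πc : McT I A O → ∀ i, A i) (πi : ∀ i, LocT I A O i → A i),
      ∃ (πD : ∀ i, LocT I A O i × McT I A O × ℝ≥0 → A i)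
        (η : ∀ i, LocT I A O i → A i → O i → PMF (LocT I A O i))
        (ψ : (∀ i, LocT I A O i × McT I A O × ℝ≥0) → PMF (∀ i, A i)),
        (∀ (i : I) (loc : LocT I A O i) (mc : McT I A O) (τ : ℝ≥0),
          (τ = 0 → πD i (loc, mc, τ) = πc mc i) ∧
          (0 < τ → πD i (loc, mc, τ) = πi i loc)) ∧
        (∀ i mi a o, η i mi a o = PMF.pure (mi ++ [(a, o)])) ∧
        (∀ m, ψ m = PMF.pure fun i => πD i (m i))) ∧
     (∀ (I : Type) (A O : I → Type) (Msg : Type)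
        (π : ∀ i, ComHist I A O Msg i → A i × Msg),
      ∃ (πa : ∀ i, ComHist I A O Msg i → A i)
        (πσ : ∀ i, ComHist I A O Msg i → Msg),
        ∀ i m, π i m = (πa i m, πσ i m))) ∧
    -- (iii) all joint-history values agree from the initial belief
    (∀ (I S : Type) (A O : I → Type) (Msg : Type)
        [Fintype I] [DecidableEq I] [Fintype S]
        [∀ i, Fintype (A i)] [∀ i, Fintype (O i)] [Fintype Msg],
      ∀ (C : DecPOMDPCom I S A O Msg) (γ : ℝ)
        (πa : ∀ i, ComHist I A O Msg i → A i)
        (πσ : ∀ i, ComHist I A O Msg i → Msg),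
      ∃ M : DecPOMDP I S (fun i => A i × Msg) (fun i => O i × (I → Msg)),
        (∀ s a, M.T s a = C.T s fun i => (a i).1) ∧
        (∀ s' a, M.Obs s' a =
          (C.Obs s' fun i => (a i).1).map fun o i => (o i, fun j => (a j).2)) ∧
        (∀ s a, M.R s a = C.R s (fun i => (a i).1) - C.cost fun i => (a i).2) ∧
        (∀ (F : S → (∀ i, A i × Msg) → PMF (I → ℝ≥0))
            (ψ : McT I (fun i => A i × Msg) (fun i => O i × (I → Msg)) →
              (∀ i, LocT I (fun i => A i × Msg) (fun i => O i × (I → Msg)) i) →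
                PMF (∀ i, A i × Msg))
            (ηc : McT I (fun i => A i × Msg) (fun i => O i × (I → Msg)) →
              (∀ i, A i × Msg) → (∀ i, O i × (I → Msg)) →
                PMF (McT I (fun i => A i × Msg) (fun i => O i × (I → Msg))))
            (ηa : ∀ i, LocT I (fun i => A i × Msg) (fun i => O i × (I → Msg)) i →
              (∀ i, A i × Msg) → (∀ i, O i × (I → Msg)) →
                PMF (LocT I (fun i => A i × Msg) (fun i => O i × (I → Msg)) i)),
          (∀ mc m, ψ mc m = PMF.pure fun i => (πa i (m i), πσ i (m i))) →
          (∀ mc a o, ηc mc a o = PMF.pure mc) →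
          (∀ i mi a o, ηa i mi a o = PMF.pure (mi ++ [(a i, o i)])) →
          ∀ (n : ℕ) (h : ∀ i, ComHist I A O Msg i) (b0 : S → ℝ),
            (∀ s : S, comValue C γ πa πσ n s h =
              sdecValue M γ F ψ ηc ηa n [] h s) ∧
            ∑ s : S, b0 s * comValue C γ πa πσ n s h =
              ∑ s : S, b0 s * sdecValue M γ F ψ ηc ηa n [] h s))  := by
  classical
  refine ⟨⟨?i1, ?i2, ?i3, ?i4⟩, ⟨?ii1, ?ii2, ?ii3, ?ii4⟩, ?iii⟩
  case i1 =>
    intro I S A O Msg _ _ _ _ _ C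
    exact ⟨com2dec C, fun _ _ => rfl, fun _ _ => rfl, fun _ _ => rfl⟩
  case i2 =>
    intro I S A O _ _ _ _ M
    refine ⟨⟨fun _ _ _ => PMF.pure fun _ => 0, fun s a _ => M.T s a,
      fun s a _ => M.Obs s a, M.R,
      fun _ _ _ => none, fun _ _ _ => none,
      fun _ i a j => if j = i then some (a j) else none,
      fun _ _ _ => none,
      fun _ i o j => if j = i then some (o j) else none,
      fun _ _ _ => none⟩,
      rfl, fun _ _ _ => rfl, fun _ _ _ => rfl, ?_, ?_,
      fun _ _ _ => rfl, fun _ _ _ => rfl⟩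
    · exact fun τ i a => ⟨if_pos rfl, fun j hj => if_neg hj⟩
    · exact fun τ i o => ⟨if_pos rfl, fun j hj => if_neg hj⟩
  case i3 =>
    intro I S A O _ _ _ _ D
    refine ⟨⟨fun p a => (D.T p.1 (fun i => a (some i)) p.2).bind fun s' =>
        (D.F s' (fun i => a (some i)) p.2).map fun τ' => (s', τ'),
      fun p a => (D.Obs p.1 (fun i => a (some i)) p.2).map fun o j =>
        match j with
        | none => fun _ => ([] : List _)
        | some i => o i,
      fun p a => D.R p.1 fun i => a (some i)⟩, ?_, ?_, fun _ _ _ => rfl⟩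
    · intro s τ a s' τ'
      show ((D.T s _ τ).bind _) (s', τ') = _
      rw [PMF.bind_apply, tsum_eq_single s']
      · rw [PMF.map_apply, tsum_eq_single τ']
        · rw [if_pos rfl, mul_comm]
        · intro τ'' hτ''
          rw [if_neg fun hc => hτ'' ((Prod.ext_iff.mp hc).2.symm)]
      · intro s'' hs''
        rw [PMF.map_apply]
        convert mul_zero _ using 2
        refine ENNReal.tsum_eq_zero.mpr fun τ'' => ?_
        rw [if_neg fun hc => hs'' ((Prod.ext_iff.mp hc).1.symm)]
    · intro s' τ' a
      show (((D.Obs s' _ τ').map _).map _) = _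
      rw [PMF.map_comp]
      have hid : ((fun (o : ∀ j, extO I A O j) i => o (some i)) ∘
          fun (o : ∀ i, O i) j =>
            match j with
            | none => fun _ => ([] : List _)
            | some i => o i) = id := rfl
      rw [hid]
      exact PMF.map_id _
  case i4 =>
    intro I S A O _ _ _ _ M
    exact ⟨Unit, inferInstance, ⟨M, fun _ => 0⟩, rfl, rfl, rfl, fun _ => rfl⟩
  case ii1 =>
    intro I A O Msg πa πσ
    exact ⟨fun i m => (πa i m, πσ i m), fun _ _ => rfl⟩
  case ii2 =>
    intro I A O πd
    exact ⟨fun _ _ => none, fun _ _ => none,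
      fun i mi a o => PMF.pure (mi ++ [(a i, o i)]),
      fun mc m => PMF.pure fun i => πd i (m i),
      fun _ _ => rfl, fun _ _ => rfl, fun _ _ _ _ => rfl, fun _ _ => rfl⟩
  case ii3 =>
    intro I A O πc πi
    refine ⟨fun i x => if x.2.2 = 0 then πc x.2.1 i else πi i x.1,
      fun i mi a o => PMF.pure (mi ++ [(a, o)]),
      fun m => PMF.pure fun i =>
        if (m i).2.2 = 0 then πc (m i).2.1 i else πi i (m i).1,
      ?_, fun _ _ _ _ => rfl, fun _ => rfl⟩
    intro i loc mc τ
    exact ⟨fun h => if_pos h, fun h => if_neg h.ne'⟩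
  case ii4 =>
    intro I A O Msg π
    exact ⟨fun i m => (π i m).1, fun i m => (π i m).2, fun _ _ => rfl⟩
  case iii =>
    intro I S A O Msg _ _ _ _ _ _ C γ πa πσ
    refine ⟨com2dec C, fun _ _ => rfl, fun _ _ => rfl, fun _ _ => rfl, ?_⟩
    intro F ψ ηc ηa hψ hηc hηa n h b0
    have key := comValue_eq_sdecValue C γ πa πσ F ψ ηc ηa hψ hηc hηa n [] h
    exact ⟨key, Finset.sum_congr rfl fun s _ => by rw [key s]⟩
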